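/- Let a, b be positive integers and N a natural number. The number of sequences s : {0, …, N−1} → {−1, +1} such that a + s_0 + ⋯ + s_{N−1} = b and there exists j ≤ N with a + s_0 + ⋯ + s_{j−1} = 0 (the walk started at a visits 0) is equal to the number of sequences s : {0, …, N−1} → {−1, +1} with s_0 + ⋯ + s_{N−1} = a + b (walks from −a to b). (Mirimanoff's reflection principle, 1923.) -/

import Mathlib

/-- Negate the first `j` entries of a list. -/
def negTake (j : ℕ) (s : List ℤ) : List ℤ :=
  (s.take j).map (fun x => -x) ++ s.drop j

lemma sum_map_neg (l : List ℤ) : (l.map (fun x => -x)).sum = -l.sum := by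
  induction l with
  | nil => simp
  | cons x l ih => simp [ih]; ring

lemma negTake_length (j : ℕ) (s : List ℤ) : (negTake j s).length = s.length := by
  simp [negTake]; omega

lemma negTake_sum (j : ℕ) (s : List ℤ) :
    (negTake j s).sum = s.sum - 2 * (s.take j).sum := by
  have h := List.sum_take_add_sum_drop s j
  rw [negTake, List.sum_append, sum_map_neg]
  omega

lemma negTake_mem {j : ℕ} {s : List ℤ} (hs : ∀ x ∈ s, x = 1 ∨ x = -1) :
    ∀ x ∈ negTake j s, x = 1 ∨ x = -1 := by
  intro x hx
  simp only [negTake, List.mem_append, List.mem_map] at hx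
  rcases hx with ⟨y, hy, rfl⟩ | hx
  · have := hs y (List.mem_of_mem_take hy)
    omega
  · exact hs x (List.mem_of_mem_drop hx)

lemma take_negTake {s : List ℤ} {i j : ℕ} (hij : i ≤ j) (hj : j ≤ s.length) :
    ((negTake j s).take i).sum = -(s.take i).sum := by
  have hlen : i ≤ ((s.take j).map (fun x => -x)).length := by
    simp; omega
  rw [negTake, List.take_append_of_le_length hlen, ← List.map_take,
    List.take_take, min_eq_left hij, sum_map_neg]

lemma negTake_negTake {j : ℕ} {s : List ℤ} (hj : j ≤ s.length) :
    negTake j (negTake j s) = s := by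
  have hA : ((s.take j).map (fun x => -x)).length = j := by simp; omega
  rw [negTake, negTake, List.take_append_of_le_length (le_of_eq hA.symm),
    List.drop_append_of_le_length (le_of_eq hA.symm),
    List.take_of_length_le (le_of_eq hA), List.drop_of_length_le (le_of_eq hA)]
  simp

-- Reflect across the first time the prefix sum equals `c` (identity if never).
open Classical in
noncomputable def reflAt (c : ℤ) (s : List ℤ) : List ℤ :=
  if h : ∃ j, (s.take j).sum = c then negTake (Nat.find h) s else s

lemma find_le_length {c : ℤ} {s : List ℤ} (h : ∃ j, (s.take j).sum = c) :
    Nat.find h ≤ s.length := by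
  by_contra hlt
  push_neg at hlt
  have h1 : (s.take s.length).sum = c := by
    rw [List.take_length]
    have := Nat.find_spec h
    rwa [List.take_of_length_le (le_of_lt hlt)] at this
  exact absurd (Nat.find_le h1) (not_le.mpr hlt)

lemma reflAt_eq {c : ℤ} {s : List ℤ} (h : ∃ j, (s.take j).sum = c) :
    reflAt c s = negTake (Nat.find h) s := by
  unfold reflAt
  rw [dif_pos h]

lemma reflAt_reflAt {c : ℤ} {s : List ℤ} (h : ∃ j, (s.take j).sum = c) :
    reflAt (-c) (reflAt c s) = s := by
  set j := Nat.find h with hj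
  have hjl : j ≤ s.length := find_le_length h
  rw [reflAt_eq h, ← hj]
  have hspec : (s.take j).sum = c := Nat.find_spec h
  have h' : ∃ i, ((negTake j s).take i).sum = -c :=
    ⟨j, by rw [take_negTake le_rfl hjl, hspec]⟩
  rw [reflAt_eq h']
  have hfind : Nat.find h' = j := by
    refine le_antisymm (Nat.find_le ?_) ?_
    · rw [take_negTake le_rfl hjl, hspec]
    · by_contra hlt
      push_neg at hlt
      have h1 : ((negTake j s).take (Nat.find h')).sum = -c := Nat.find_spec h'
      rw [take_negTake (le_of_lt hlt) hjl] at h1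
      have : (s.take (Nat.find h')).sum = c := by omega
      exact Nat.find_min h hlt this
  rw [hfind, negTake_negTake hjl]

/-- Discrete IVT for ±1 step lists. -/
lemma exists_prefix_sum_eq {t : List ℤ} (hpm : ∀ x ∈ t, x = 1 ∨ x = -1)
    {c : ℤ} (h0 : 0 ≤ c) (hN : c ≤ t.sum) : ∃ j, (t.take j).sum = c := by
  induction t generalizing c with
  | nil => exact ⟨0, by simpa using le_antisymm h0 hN⟩
  | cons x t ih =>
    rcases eq_or_lt_of_le h0 with rfl | hc
    · exact ⟨0, by simp⟩
    · have hx := hpm x List.mem_cons_self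
      have hsum : (x :: t).sum = x + t.sum := by simp
      obtain ⟨j, hj⟩ := ih (fun y hy => hpm y (List.mem_cons_of_mem x hy))
        (c := c - x) (by omega) (by omega)
      exact ⟨j + 1, by simp [hj]⟩

/-- Mirimanoff's reflection principle (1923): for positive integers `a, b` and
length `N`, the number of ±1 walks of length `N` from `a` to `b` that visit `0`
equals the number of ±1 walks of length `N` from `−a` to `b`. -/
theorem reflection_principle (a b : ℤ) (ha : 0 < a) (hb : 0 < b) (N : ℕ) :
    {s : List ℤ | s.length = N ∧ (∀ x ∈ s, x = 1 ∨ x = -1) ∧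
        a + s.sum = b ∧ ∃ j ≤ N, a + (s.take j).sum = 0}.ncard
      = {s : List ℤ | s.length = N ∧ (∀ x ∈ s, x = 1 ∨ x = -1) ∧
          s.sum = a + b}.ncard := by
  set S₁ := {s : List ℤ | s.length = N ∧ (∀ x ∈ s, x = 1 ∨ x = -1) ∧
        a + s.sum = b ∧ ∃ j ≤ N, a + (s.take j).sum = 0} with hS₁
  set S₂ := {s : List ℤ | s.length = N ∧ (∀ x ∈ s, x = 1 ∨ x = -1) ∧
          s.sum = a + b} with hS₂
  -- every s ∈ S₁ has a prefix sum equal to -a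
  have hex₁ : ∀ s ∈ S₁, ∃ j, (s.take j).sum = -a := by
    rintro s ⟨-, -, -, j, -, hj⟩
    exact ⟨j, by omega⟩
  -- every t ∈ S₂ has a prefix sum equal to a
  have hex₂ : ∀ t ∈ S₂, ∃ j, (t.take j).sum = a := by
    rintro t ⟨-, hpm, hsum⟩
    exact exists_prefix_sum_eq hpm (le_of_lt ha) (by omega)
  -- forward map lands in S₂
  have hmaps : ∀ s ∈ S₁, reflAt (-a) s ∈ S₂ := by
    intro s hs
    have h := hex₁ s hs
    obtain ⟨hlen, hpm, hsum, -⟩ := hs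
    rw [reflAt_eq h]
    refine ⟨by rw [negTake_length, hlen], negTake_mem hpm, ?_⟩
    rw [negTake_sum, Nat.find_spec h]
    omega
  -- injectivity on S₁
  have hinj : Set.InjOn (reflAt (-a)) S₁ := by
    intro s hs s' hs' heq
    have h1 : reflAt (- -a) (reflAt (-a) s) = s := reflAt_reflAt (hex₁ s hs)
    have h2 : reflAt (- -a) (reflAt (-a) s') = s' := reflAt_reflAt (hex₁ s' hs')
    rw [← h1, ← h2, heq]
  -- image equals S₂
  have himg : reflAt (-a) '' S₁ = S₂ := by
    apply Set.Subset.antisymm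
    · rintro t ⟨s, hs, rfl⟩; exact hmaps s hs
    · intro t ht
      obtain ⟨hlen, hpm, hsum⟩ := ht
      have h := hex₂ t ⟨hlen, hpm, hsum⟩
      refine ⟨reflAt a t, ?_, ?_⟩
      · rw [reflAt_eq h]
        have hjl : Nat.find h ≤ t.length := find_le_length h
        refine ⟨by rw [negTake_length, hlen], negTake_mem hpm, ?_, ?_⟩
        · rw [negTake_sum, Nat.find_spec h]; omega
        · refine ⟨Nat.find h, by omega, ?_⟩
          rw [take_negTake le_rfl hjl, Nat.find_spec h]
          ring
      · have : reflAt (-a) (reflAt a t) = t := reflAt_reflAt h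
        exact this
  calc S₁.ncard = (reflAt (-a) '' S₁).ncard := (Set.ncard_image_of_injOn hinj).symm
    _ = S₂.ncard := by rw [himg]
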